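/- Let 0 < γ < 1 and κ > √(2γ(1-γ)). Define D = κ² + 2γ(γ-1) > 0 and β₊ = (κ² + γ² + κ√D)/(2κ² + γ³). Then 1 < (2-γ)β₊ < 2 and (1-2γ)β₊ < 1. -/

import Mathlib

theorem stmt_9 (κ γ : ℝ) (hγ0 : 0 < γ) (hγ1 : γ < 1)
    (hκ : Real.sqrt (2 * γ * (1 - γ)) < κ) :
    1 < (2 - γ) * ((κ ^ 2 + γ ^ 2 + κ * Real.sqrt (κ ^ 2 + 2 * γ * (γ - 1))) /
        (2 * κ ^ 2 + γ ^ 3)) ∧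
    (2 - γ) * ((κ ^ 2 + γ ^ 2 + κ * Real.sqrt (κ ^ 2 + 2 * γ * (γ - 1))) /
        (2 * κ ^ 2 + γ ^ 3)) < 2 ∧
    (1 - 2 * γ) * ((κ ^ 2 + γ ^ 2 + κ * Real.sqrt (κ ^ 2 + 2 * γ * (γ - 1))) /
        (2 * κ ^ 2 + γ ^ 3)) < 1 := by
  have hg : (0:ℝ) < 2 * γ * (1 - γ) := by nlinarith
  have hκ0 : 0 < κ := lt_of_le_of_lt (Real.sqrt_nonneg _) hκ
  have hκ2 : 2 * γ * (1 - γ) < κ ^ 2 := by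
    have := Real.sq_sqrt hg.le
    nlinarith [Real.sqrt_nonneg (2 * γ * (1 - γ))]
  have hD : 0 < κ ^ 2 + 2 * γ * (γ - 1) := by nlinarith
  set s := Real.sqrt (κ ^ 2 + 2 * γ * (γ - 1)) with hs
  have hs2 : s ^ 2 = κ ^ 2 + 2 * γ * (γ - 1) := Real.sq_sqrt hD.le
  have hs0 : 0 < s := Real.sqrt_pos.mpr hD
  have hsκ : s < κ := by nlinarith
  have hQ : 0 < 2 * κ ^ 2 + γ ^ 3 := by positivity
  refine ⟨?_, ?_, ?_⟩
  · rw [mul_div_assoc', lt_div_iff₀ hQ]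
    nlinarith [mul_pos hs0 (by nlinarith : 0 < (2 - γ) * κ - γ * s)]
  · rw [mul_div_assoc']
    rw [div_lt_iff₀ hQ]
    nlinarith [mul_pos hκ0 hs0]
  · rw [mul_div_assoc']
    rw [div_lt_iff₀ hQ]
    rcases le_or_gt γ (1/2) with h | h
    · nlinarith [mul_pos hκ0 hs0]
    · nlinarith [mul_pos hκ0 hs0]
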